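/- Let s ∈ (0,1/2), j ∈ ℕ and k ∈ ℕ, and define f_j(y) = ∫_{1}^{∞} e^{−y(σ−1)} [(σ²−1)^s/σ]^{j+1} dσ/σ for y > 0. Then lim_{y→∞} y^{k+1+s(j+1)} · f_j^{(k)}(y) = (−1)^k 2^{s(j+1)} ∫_{0}^{∞} e^{−w} w^{k+s(j+1)} dw = (−1)^k 2^{s(j+1)} Γ(k + s(j+1) + 1), where f_j^{(k)} denotes the k-th derivative and Γ is the Gamma function. -/

import Mathlib

open Filter MeasureTheory Set

namespace Stmt8Aux

lemma shift_integral (f : ℝ → ℝ) :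
    (∫ x in Ioi (0:ℝ), f (x + 1)) = ∫ x in Ioi (1:ℝ), f x := by
  have := (measurePreserving_add_right (volume : Measure ℝ) 1).setIntegral_preimage_emb
    (measurableEmbedding_addRight 1) f (Ioi 1)
  simpa using this

lemma shift_integrableOn {f : ℝ → ℝ} (h : IntegrableOn f (Ioi (0:ℝ))) :
    IntegrableOn (fun x => f (x - 1)) (Ioi (1:ℝ)) := by
  have := ((measurePreserving_add_right (volume : Measure ℝ) 1).integrableOn_comp_preimage
    (measurableEmbedding_addRight 1) (f := fun x => f (x - 1)) (s := Ioi 1))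
  rw [← this]
  simpa [Function.comp_def] using h

lemma int_exp_rpow {c β : ℝ} (hc : 0 < c) (hβ : -1 < β) :
    IntegrableOn (fun w => Real.exp (-(c * w)) * w ^ β) (Ioi (0:ℝ)) := by
  have := integrableOn_rpow_mul_exp_neg_mul_rpow hβ one_pos hc
  refine this.congr_fun (fun x hx => ?_) measurableSet_Ioi
  dsimp only
  rw [Real.rpow_one, mul_comm, neg_mul]

lemma int_exp_pow (m : ℕ) : ∀ β : ℝ, -1 < β →
    IntegrableOn (fun w => Real.exp (-w) * w ^ β * (2 + w) ^ m) (Ioi (0:ℝ)) := by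
  induction m with
  | zero => intro β hβ; simpa [neg_mul, one_mul] using int_exp_rpow one_pos hβ
  | succ m ih =>
    intro β hβ
    have h1 := (ih β hβ).const_mul 2
    have h2 := ih (β + 1) (by linarith)
    refine IntegrableOn.congr_fun (h1.add h2) (fun x hx => ?_) measurableSet_Ioi
    have hx0 : (0:ℝ) < x := hx
    have hh : x ^ (β + 1) = x ^ β * x := by
      rw [Real.rpow_add hx0, Real.rpow_one]
    simp only [Pi.add_apply, hh]
    ring

noncomputable def gAux (s : ℝ) (j m : ℕ) (y : ℝ) : ℝ :=
  ∫ σ in Ioi (1:ℝ), Real.exp (-(y * (σ - 1))) * (σ - 1) ^ m * (((σ ^ 2 - 1) ^ s / σ) ^ (j + 1) / σ)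

lemma P_nonneg (s : ℝ) (j : ℕ) {σ : ℝ} (hσ : 1 < σ) :
    0 ≤ ((σ ^ 2 - 1) ^ s / σ) ^ (j + 1) / σ := by
  have h0 : (0:ℝ) < σ := by linarith
  have hb : (0:ℝ) ≤ σ ^ 2 - 1 := by nlinarith
  exact div_nonneg (pow_nonneg (div_nonneg (Real.rpow_nonneg hb s) h0.le) _) h0.le

lemma P_le_one {s : ℝ} (j : ℕ) (hs0 : 0 < s) (hs2 : s < 1/2) {σ : ℝ} (hσ : 1 < σ) :
    ((σ ^ 2 - 1) ^ s / σ) ^ (j + 1) / σ ≤ 1 := by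
  have h0 : (0:ℝ) < σ := by linarith
  have h1 : (σ ^ 2 - 1 : ℝ) ^ s ≤ σ := by
    calc (σ ^ 2 - 1 : ℝ) ^ s ≤ (σ ^ 2) ^ s :=
          Real.rpow_le_rpow (by nlinarith) (by nlinarith) hs0.le
      _ = σ ^ (2 * s) := by
          rw [← Real.rpow_natCast σ 2, ← Real.rpow_mul h0.le]; norm_num
      _ ≤ σ ^ (1:ℝ) := Real.rpow_le_rpow_of_exponent_le hσ.le (by linarith)
      _ = σ := Real.rpow_one σ
  have h2 : ((σ ^ 2 - 1 : ℝ) ^ s / σ) ≤ 1 := (div_le_one h0).mpr h1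
  have h3 : ((σ ^ 2 - 1 : ℝ) ^ s / σ) ^ (j + 1) ≤ 1 :=
    pow_le_one₀ (div_nonneg (Real.rpow_nonneg (by nlinarith) s) h0.le) h2
  rw [div_le_one h0]
  exact h3.trans (by linarith)

lemma cont_integrand (s y : ℝ) (j m : ℕ) :
    ContinuousOn (fun σ : ℝ =>
      Real.exp (-(y * (σ - 1))) * (σ - 1) ^ m * (((σ ^ 2 - 1) ^ s / σ) ^ (j + 1) / σ))
      (Ioi (1:ℝ)) := by
  have hne : ∀ σ ∈ Ioi (1:ℝ), σ ≠ 0 := fun σ hσ => by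
    have : (1:ℝ) < σ := hσ; linarith
  apply ContinuousOn.mul
  · apply ContinuousOn.mul
    · exact (Real.continuous_exp.comp (by continuity)).continuousOn
    · exact ((continuous_id.sub continuous_const).pow m).continuousOn
  · apply ContinuousOn.div _ continuousOn_id hne
    apply ContinuousOn.pow
    apply ContinuousOn.div _ continuousOn_id hne
    exact ContinuousOn.rpow_const (by fun_prop)
      (fun σ hσ => Or.inl (by have h1 : (1:ℝ) < σ := hσ; nlinarith))

lemma boundInt {y : ℝ} (hy : 0 < y) (m : ℕ) :
    IntegrableOn (fun σ : ℝ => Real.exp (-(y * (σ - 1))) * (σ - 1) ^ m) (Ioi (1:ℝ)) := by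
  have hm1 : (-1:ℝ) < (m:ℝ) := lt_of_lt_of_le (by norm_num) (Nat.cast_nonneg m)
  have base : IntegrableOn (fun w : ℝ => Real.exp (-(y * w)) * w ^ (m:ℝ)) (Ioi (0:ℝ)) :=
    int_exp_rpow hy hm1
  have h0 : IntegrableOn (fun t : ℝ => Real.exp (-(y * t)) * t ^ m) (Ioi (0:ℝ)) := by
    refine base.congr_fun (fun t ht => ?_) measurableSet_Ioi
    simp only [Real.rpow_natCast]
  exact shift_integrableOn (f := fun t : ℝ => Real.exp (-(y * t)) * t ^ m) h0

lemma integrableOn_gAux {s : ℝ} (j m : ℕ) (hs0 : 0 < s) (hs2 : s < 1/2) {y : ℝ} (hy : 0 < y) :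
    IntegrableOn (fun σ : ℝ =>
      Real.exp (-(y * (σ - 1))) * (σ - 1) ^ m * (((σ ^ 2 - 1) ^ s / σ) ^ (j + 1) / σ))
      (Ioi (1:ℝ)) := by
  refine Integrable.mono' (boundInt hy m)
    ((cont_integrand s y j m).aestronglyMeasurable measurableSet_Ioi) ?_
  rw [ae_restrict_iff' measurableSet_Ioi]
  refine Filter.Eventually.of_forall (fun σ hσ => ?_)
  have h1 : (1:ℝ) < σ := hσ
  have hP0 := P_nonneg s j h1
  have hP1 := P_le_one j hs0 hs2 h1
  have he : (0:ℝ) < Real.exp (-(y * (σ - 1))) := Real.exp_pos _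
  have hσ1 : (0:ℝ) ≤ σ - 1 := by linarith
  have hm : (0:ℝ) ≤ (σ - 1) ^ m := pow_nonneg hσ1 _
  have hnn : (0:ℝ) ≤ Real.exp (-(y * (σ - 1))) * (σ - 1) ^ m := mul_nonneg he.le hm
  rw [Real.norm_eq_abs, abs_of_nonneg (mul_nonneg hnn hP0)]
  calc Real.exp (-(y * (σ - 1))) * (σ - 1) ^ m * (((σ ^ 2 - 1) ^ s / σ) ^ (j + 1) / σ)
      ≤ Real.exp (-(y * (σ - 1))) * (σ - 1) ^ m * 1 := by
        apply mul_le_mul_of_nonneg_left hP1 hnn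
    _ = Real.exp (-(y * (σ - 1))) * (σ - 1) ^ m := mul_one _

lemma hasDerivAt_gAux {s : ℝ} (j m : ℕ) (hs0 : 0 < s) (hs2 : s < 1/2) {y : ℝ} (hy : 0 < y) :
    HasDerivAt (gAux s j m) (-(gAux s j (m + 1) y)) y := by
  have key := hasDerivAt_integral_of_dominated_loc_of_deriv_le
    (F := fun (x : ℝ) (σ : ℝ) =>
      Real.exp (-(x * (σ - 1))) * (σ - 1) ^ m * (((σ ^ 2 - 1) ^ s / σ) ^ (j + 1) / σ))
    (F' := fun (x : ℝ) (σ : ℝ) =>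
      -(Real.exp (-(x * (σ - 1))) * (σ - 1) ^ (m + 1) * (((σ ^ 2 - 1) ^ s / σ) ^ (j + 1) / σ)))
    (x₀ := y) (s := Metric.ball y (y / 2))
    (bound := fun σ => Real.exp (-(y / 2 * (σ - 1))) * (σ - 1) ^ (m + 1))
    (μ := volume.restrict (Ioi 1)) (Metric.ball_mem_nhds _ (by positivity)) ?_ ?_ ?_ ?_ ?_ ?_
  · have h2 : (∫ σ in Ioi (1:ℝ),
        -(Real.exp (-(y * (σ - 1))) * (σ - 1) ^ (m + 1) * (((σ ^ 2 - 1) ^ s / σ) ^ (j + 1) / σ)))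
        = -(gAux s j (m + 1) y) := by
      rw [integral_neg]; rfl
    rw [h2] at key
    exact key.2
  · exact Filter.Eventually.of_forall (fun x =>
      (cont_integrand s x j m).aestronglyMeasurable measurableSet_Ioi)
  · exact integrableOn_gAux j m hs0 hs2 hy
  · exact (((cont_integrand s y j (m + 1)).aestronglyMeasurable measurableSet_Ioi).neg)
  · rw [ae_restrict_iff' measurableSet_Ioi]
    refine Filter.Eventually.of_forall (fun σ hσ x hx => ?_)
    have h1 : (1:ℝ) < σ := hσ
    have hx2 : y / 2 < x := by
      have := abs_lt.mp (mem_ball_iff_norm.mp hx)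
      linarith [this.1]
    have hσ1 : (0:ℝ) ≤ σ - 1 := by linarith
    have hP0 := P_nonneg s j h1
    have hP1 := P_le_one j hs0 hs2 h1
    have hnn : (0:ℝ) ≤ Real.exp (-(x * (σ - 1))) * (σ - 1) ^ (m + 1) :=
      mul_nonneg (Real.exp_pos _).le (pow_nonneg hσ1 _)
    rw [norm_neg, Real.norm_eq_abs, abs_of_nonneg (mul_nonneg hnn hP0)]
    have hexp : Real.exp (-(x * (σ - 1))) ≤ Real.exp (-(y / 2 * (σ - 1))) := by
      apply Real.exp_le_exp.mpr
      have : (0:ℝ) ≤ σ - 1 := by linarith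
      nlinarith
    calc Real.exp (-(x * (σ - 1))) * (σ - 1) ^ (m + 1) * (((σ ^ 2 - 1) ^ s / σ) ^ (j + 1) / σ)
        ≤ Real.exp (-(x * (σ - 1))) * (σ - 1) ^ (m + 1) * 1 :=
          mul_le_mul_of_nonneg_left hP1 hnn
      _ = Real.exp (-(x * (σ - 1))) * (σ - 1) ^ (m + 1) := mul_one _
      _ ≤ Real.exp (-(y / 2 * (σ - 1))) * (σ - 1) ^ (m + 1) :=
          mul_le_mul_of_nonneg_right hexp (pow_nonneg hσ1 _)
  · exact boundInt (by positivity) (m + 1)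
  · rw [ae_restrict_iff' measurableSet_Ioi]
    refine Filter.Eventually.of_forall (fun σ hσ x hx => ?_)
    have h1 : (1:ℝ) < σ := hσ
    have hD : HasDerivAt (fun x : ℝ => Real.exp (-(x * (σ - 1))))
        (-(σ - 1) * Real.exp (-(x * (σ - 1)))) x := by
      have : HasDerivAt (fun x : ℝ => -(x * (σ - 1))) (-(σ - 1)) x := by
        exact ((hasDerivAt_id x).mul_const (σ - 1)).neg.congr_deriv (by ring)
      have hc := (Real.hasDerivAt_exp (-(x * (σ - 1)))).comp x this
      exact hc.congr_deriv (by ring)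
    have := (hD.mul_const ((σ - 1) ^ m)).mul_const (((σ ^ 2 - 1) ^ s / σ) ^ (j + 1) / σ)
    exact this.congr_deriv (by ring)

lemma alg (s : ℝ) (j k : ℕ) {y w : ℝ} (hy : 0 < y) (hw : 0 < w) :
    y ^ ((k:ℝ) + 1 + s * ((j:ℝ)+1)) * y⁻¹ *
      (Real.exp (-(y * ((y⁻¹ * w + 1) - 1))) * ((y⁻¹ * w + 1) - 1) ^ k *
        ((((y⁻¹ * w + 1) ^ 2 - 1) ^ s / (y⁻¹ * w + 1)) ^ (j + 1) / (y⁻¹ * w + 1)))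
    = Real.exp (-w) * w ^ ((k:ℝ) + s * ((j:ℝ)+1)) *
      ((w / y + 2) ^ (s * ((j:ℝ)+1)) * (w / y + 1) ^ (-((j:ℝ)+2))) := by
  have hu : 0 < w / y := div_pos hw hy
  have hyw : y * (w / y) = w := by field_simp
  simp only [inv_mul_eq_div, add_sub_cancel_right]
  rw [hyw]
  have e2 : ((w / y + 1) ^ 2 - 1 : ℝ) = (w / y) * (w / y + 2) := by ring
  rw [e2, Real.mul_rpow hu.le (by linarith : (0:ℝ) ≤ w / y + 2)]
  rw [div_pow ((w / y) ^ s * (w / y + 2) ^ s) (w / y + 1) (j+1), mul_pow]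
  have ej : ∀ x : ℝ, 0 ≤ x → (x ^ s) ^ (j + 1) = x ^ (s * ((j:ℝ)+1)) := by
    intro x hx
    rw [← Real.rpow_natCast (x ^ s) (j + 1), ← Real.rpow_mul hx]
    push_cast
    ring_nf
  rw [ej _ hu.le, ej _ (by linarith : (0:ℝ) ≤ w / y + 2)]
  have hy1 : y ^ ((k:ℝ) + 1 + s * ((j:ℝ)+1)) = y ^ (k:ℕ) * y * y ^ (s * ((j:ℝ)+1)) := by
    rw [Real.rpow_add hy, Real.rpow_add hy, Real.rpow_one, Real.rpow_natCast]
  have hw1 : w ^ ((k:ℝ) + s * ((j:ℝ)+1)) = w ^ (k:ℕ) * w ^ (s * ((j:ℝ)+1)) := by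
    rw [Real.rpow_add hw, Real.rpow_natCast]
  have hwy_k : (w / y) ^ (k:ℕ) * y ^ (k:ℕ) = w ^ (k:ℕ) := by
    rw [← mul_pow, div_mul_cancel₀ _ hy.ne']
  have hwy_q : (w / y) ^ (s * ((j:ℝ)+1)) * y ^ (s * ((j:ℝ)+1)) = w ^ (s * ((j:ℝ)+1)) := by
    rw [← Real.mul_rpow hu.le hy.le, div_mul_cancel₀ _ hy.ne']
  have hneg : (w / y + 1) ^ (-((j:ℝ)+2)) = ((w / y + 1) ^ (j+1) * (w / y + 1))⁻¹ := by
    rw [Real.rpow_neg (by linarith : (0:ℝ) ≤ w / y + 1)]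
    congr 1
    rw [show ((j:ℝ)+2) = ((j+2 : ℕ) : ℝ) by push_cast; ring, Real.rpow_natCast, pow_succ]
  rw [hneg, hy1, hw1, ← hwy_k, ← hwy_q]
  have hp1 : (0:ℝ) < (w / y + 1) ^ (j+1) := by positivity
  field_simp

lemma gAux_eq (s : ℝ) (j k : ℕ) {y : ℝ} (hy : 0 < y) :
    y ^ ((k:ℝ) + 1 + s * ((j:ℝ)+1)) * gAux s j k y
      = ∫ w in Ioi (0:ℝ), Real.exp (-w) * w ^ ((k:ℝ) + s * ((j:ℝ)+1)) *
          ((w / y + 2) ^ (s * ((j:ℝ)+1)) * (w / y + 1) ^ (-((j:ℝ)+2))) := by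
  set E : ℝ → ℝ := fun σ =>
    Real.exp (-(y * (σ - 1))) * (σ - 1) ^ k * (((σ ^ 2 - 1) ^ s / σ) ^ (j + 1) / σ) with hE
  have h1 : gAux s j k y = ∫ t in Ioi (0:ℝ), E (t + 1) := (shift_integral E).symm
  have h2 : (∫ x in Ioi (0:ℝ), E (y⁻¹ * x + 1)) = y • ∫ t in Ioi (0:ℝ), E (t + 1) := by
    have := integral_comp_mul_left_Ioi (fun t => E (t + 1)) 0 (inv_pos.mpr hy)
    simpa [inv_inv] using this
  have h3 : (∫ t in Ioi (0:ℝ), E (t + 1)) = y⁻¹ * ∫ x in Ioi (0:ℝ), E (y⁻¹ * x + 1) := by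
    rw [h2, smul_eq_mul, ← mul_assoc, inv_mul_cancel₀ hy.ne', one_mul]
  rw [h1, h3, ← mul_assoc, ← MeasureTheory.integral_const_mul]
  refine setIntegral_congr_fun measurableSet_Ioi (fun w hw => ?_)
  have hw0 : (0:ℝ) < w := hw
  exact alg s j k hy hw0

end Stmt8Aux

open Stmt8Aux

/-- The function `f_j(y) = ∫_1^∞ e^{-y(σ-1)} [(σ²-1)^s/σ]^{j+1} dσ/σ`. -/
noncomputable def fAux (s : ℝ) (j : ℕ) (y : ℝ) : ℝ :=
  ∫ σ in Set.Ioi (1 : ℝ), Real.exp (-(y * (σ - 1))) * ((σ ^ 2 - 1) ^ s / σ) ^ (j + 1) / σ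

namespace Stmt8Aux

lemma fAux_eq_gAux (s : ℝ) (j : ℕ) : fAux s j = gAux s j 0 := by
  funext y
  unfold fAux gAux
  congr 1
  funext σ
  rw [pow_zero, mul_one, mul_div_assoc]

lemma iteratedDeriv_fAux {s : ℝ} (hs0 : 0 < s) (hs2 : s < 1/2) (j k : ℕ) :
    ∀ y : ℝ, 0 < y → iteratedDeriv k (fAux s j) y = (-1:ℝ)^k * gAux s j k y := by
  induction k with
  | zero =>
    intro y hy
    simp [iteratedDeriv_zero, fAux_eq_gAux]
  | succ k ih =>
    intro y hy
    rw [iteratedDeriv_succ]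
    have hev : iteratedDeriv k (fAux s j) =ᶠ[nhds y] (fun z => (-1:ℝ)^k * gAux s j k z) := by
      filter_upwards [IsOpen.mem_nhds isOpen_Ioi hy] with z hz using ih z hz
    rw [hev.deriv_eq]
    have hd : HasDerivAt (fun z => (-1:ℝ)^k * gAux s j k z)
        ((-1:ℝ)^k * -(gAux s j (k+1) y)) y :=
      (hasDerivAt_gAux j k hs0 hs2 hy).const_mul _
    rw [hd.deriv]
    ring

end Stmt8Aux

/-- For `s ∈ (0,1/2)`, `j, k ∈ ℕ`:
`lim_{y→∞} y^{k+1+s(j+1)} f_j^{(k)}(y) = (-1)^k 2^{s(j+1)} ∫_0^∞ e^{-w} w^{k+s(j+1)} dw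
  = (-1)^k 2^{s(j+1)} Γ(k+s(j+1)+1)`. -/
theorem stmt_8 (s : ℝ) (j k : ℕ) (hs0 : 0 < s) (hs2 : s < 1 / 2) :
    Tendsto
      (fun y : ℝ => y ^ ((k : ℝ) + 1 + s * ((j : ℝ) + 1)) * iteratedDeriv k (fAux s j) y)
      atTop
      (nhds ((-1 : ℝ) ^ k * (2 : ℝ) ^ (s * ((j : ℝ) + 1)) *
        ∫ w in Set.Ioi (0 : ℝ), Real.exp (-w) * w ^ ((k : ℝ) + s * ((j : ℝ) + 1)))) ∧
    (∫ w in Set.Ioi (0 : ℝ), Real.exp (-w) * w ^ ((k : ℝ) + s * ((j : ℝ) + 1)))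
      = Real.Gamma ((k : ℝ) + s * ((j : ℝ) + 1) + 1) := by
  have hq0 : 0 < s * ((j:ℝ) + 1) := by positivity
  have hβ0 : 0 < (k:ℝ) + s * ((j:ℝ) + 1) := by positivity
  constructor
  · -- the limit
    set q : ℝ := s * ((j:ℝ) + 1) with hqdef
    set β : ℝ := (k:ℝ) + q with hβdef
    -- dominated convergence for the transformed integrals
    have hDCT : Tendsto (fun y : ℝ => ∫ w in Ioi (0:ℝ),
        Real.exp (-w) * w ^ β * ((w / y + 2) ^ q * (w / y + 1) ^ (-((j:ℝ)+2)))) atTop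
        (nhds (∫ w in Ioi (0:ℝ), (Real.exp (-w) * w ^ β) * ((2:ℝ) ^ q * 1))) := by
      refine tendsto_integral_filter_of_dominated_convergence
        (fun w => Real.exp (-w) * w ^ β * (2 + w) ^ (j+1)) ?_ ?_ ?_ ?_
      · -- measurability
        filter_upwards [eventually_ge_atTop (1:ℝ)] with y hy1
        have hy0 : (0:ℝ) < y := by linarith
        apply ContinuousOn.aestronglyMeasurable _ measurableSet_Ioi
        apply ContinuousOn.mul
        · apply ContinuousOn.mul
          · exact (Real.continuous_exp.comp continuous_neg).continuousOn
          · exact ContinuousOn.rpow_const continuousOn_id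
              (fun x hx => Or.inl (ne_of_gt hx))
        · apply ContinuousOn.mul
          · refine ContinuousOn.rpow_const (by fun_prop) (fun x hx => Or.inl ?_)
            have : (0:ℝ) < x := hx
            positivity
          · refine ContinuousOn.rpow_const (by fun_prop) (fun x hx => Or.inl ?_)
            have : (0:ℝ) < x := hx
            positivity
      · -- bound
        filter_upwards [eventually_ge_atTop (1:ℝ)] with y hy1
        rw [ae_restrict_iff' measurableSet_Ioi]
        refine Filter.Eventually.of_forall (fun w hw => ?_)
        have hw0 : (0:ℝ) < w := hw
        have hy0 : (0:ℝ) < y := by linarith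
        have hwy : 0 < w / y := div_pos hw0 hy0
        have hA : (0:ℝ) ≤ Real.exp (-w) * w ^ β :=
          mul_nonneg (Real.exp_pos _).le (Real.rpow_nonneg hw0.le _)
        have hB : (w / y + 2) ^ q ≤ (2 + w) ^ (j+1) := by
          calc (w / y + 2) ^ q ≤ (2 + w) ^ q := by
                apply Real.rpow_le_rpow (by linarith) _ hq0.le
                have : w / y ≤ w := div_le_self hw0.le hy1
                linarith
            _ ≤ (2 + w) ^ (((j:ℕ)+1 : ℕ) : ℝ) := by
                apply Real.rpow_le_rpow_of_exponent_le (by linarith)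
                push_cast
                nlinarith [Nat.cast_nonneg (α := ℝ) j]
            _ = (2 + w) ^ (j+1) := by rw [Real.rpow_natCast]
        have hC : (w / y + 1) ^ (-((j:ℝ)+2)) ≤ 1 :=
          Real.rpow_le_one_of_one_le_of_nonpos (by linarith) (by linarith [Nat.cast_nonneg (α := ℝ) j])
        have hBnn : (0:ℝ) ≤ (w / y + 2) ^ q := Real.rpow_nonneg (by linarith) _
        have hCnn : (0:ℝ) ≤ (w / y + 1) ^ (-((j:ℝ)+2)) := Real.rpow_nonneg (by linarith) _
        rw [Real.norm_eq_abs, abs_of_nonneg (mul_nonneg hA (mul_nonneg hBnn hCnn))]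
        calc Real.exp (-w) * w ^ β * ((w / y + 2) ^ q * (w / y + 1) ^ (-((j:ℝ)+2)))
            ≤ Real.exp (-w) * w ^ β * ((2 + w) ^ (j+1) * 1) := by
              apply mul_le_mul_of_nonneg_left _ hA
              exact mul_le_mul hB hC hCnn (by positivity)
          _ = Real.exp (-w) * w ^ β * (2 + w) ^ (j+1) := by ring
      · -- integrable bound
        exact int_exp_pow (j+1) β (by linarith)
      · -- pointwise limit
        rw [ae_restrict_iff' measurableSet_Ioi]
        refine Filter.Eventually.of_forall (fun w hw => ?_)
        have hw0 : (0:ℝ) < w := hw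
        have hdiv : Tendsto (fun y : ℝ => w / y) atTop (nhds 0) :=
          Filter.Tendsto.div_atTop tendsto_const_nhds tendsto_id
        have h2 : Tendsto (fun y : ℝ => (w / y + 2) ^ q) atTop (nhds ((2:ℝ) ^ q)) := by
          have hb : Tendsto (fun y : ℝ => w / y + 2) atTop (nhds 2) := by
            simpa using hdiv.add_const 2
          exact ((Real.continuousAt_rpow_const 2 q (Or.inl two_ne_zero)).tendsto).comp hb
        have h1 : Tendsto (fun y : ℝ => (w / y + 1) ^ (-((j:ℝ)+2))) atTop (nhds 1) := by
          have hb : Tendsto (fun y : ℝ => w / y + 1) atTop (nhds 1) := by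
            simpa using hdiv.add_const 1
          have := ((Real.continuousAt_rpow_const 1 (-((j:ℝ)+2))
            (Or.inl one_ne_zero)).tendsto).comp hb
          simpa [Real.one_rpow, Function.comp_def] using this
        exact tendsto_const_nhds.mul (h2.mul h1)
    -- now identify the functions eventually and the limit values
    have hcongr : ∀ᶠ y in atTop,
        (fun y : ℝ => (-1:ℝ)^k * ∫ w in Ioi (0:ℝ),
          Real.exp (-w) * w ^ β * ((w / y + 2) ^ q * (w / y + 1) ^ (-((j:ℝ)+2)))) y
        = y ^ ((k:ℝ) + 1 + q) * iteratedDeriv k (fAux s j) y := by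
      filter_upwards [eventually_gt_atTop (0:ℝ)] with y hy0
      rw [iteratedDeriv_fAux hs0 hs2 j k y hy0, ← gAux_eq s j k hy0]
      ring
    have hlim := (hDCT.const_mul ((-1:ℝ)^k)).congr' hcongr
    have : (-1:ℝ)^k * ∫ w in Ioi (0:ℝ), (Real.exp (-w) * w ^ β) * ((2:ℝ) ^ q * 1)
        = (-1:ℝ)^k * (2:ℝ)^q * ∫ w in Ioi (0:ℝ), Real.exp (-w) * w ^ β := by
      rw [show (((2:ℝ) ^ q * 1)) = (2:ℝ)^q by ring]
      rw [MeasureTheory.integral_mul_const]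
      ring
    rw [this] at hlim
    exact hlim
  · -- the Gamma identity
    rw [Real.Gamma_eq_integral (by linarith)]
    congr 1
    funext w
    rw [add_sub_cancel_right]
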